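/- Let A' be the one-point extension of a finite-dimensional algebra A by a nonzero A-module U, let S be the new simple A'-module and P its projective cover, so there is an exact sequence 0 → U → P → S → 0. Then P is injective as an A'-module if and only if U is an injective A-module with endomorphism algebra isomorphic to k. -/

import Mathlib

section OnePointExtension

variable (k A U : Type*) [Field k] [Ring A] [Algebra k A]
  [AddCommGroup U] [Module k U] [Module A U] [IsScalarTower k A U]

/-- The product algebra `A × k` acts on `U` from the left through its first factor. -/
noncomputable instance opeLeftModule : Module (A × k) U :=
  Module.compHom U (RingHom.fst A k)

/-- The ring homomorphism `(A × k)ᵐᵒᵖ → k` given by the second factor. -/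
def opeSndOp : (A × k)ᵐᵒᵖ →+* k where
  toFun r := r.unop.2
  map_one' := rfl
  map_mul' r s := mul_comm s.unop.2 r.unop.2
  map_zero' := rfl
  map_add' r s := rfl

/-- The product algebra `A × k` acts on `U` from the right through its second factor. -/
noncomputable instance opeRightModule : Module (A × k)ᵐᵒᵖ U :=
  Module.compHom U (opeSndOp k A)

noncomputable instance opeSMulCommClass : SMulCommClass (A × k) (A × k)ᵐᵒᵖ U :=
  ⟨fun r s u => by
    show r.1 • (s.unop.2 • u) = s.unop.2 • (r.1 • u)
    exact (smul_comm s.unop.2 r.1 u).symm⟩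

/-- The one-point extension `A' = A[U]`: the triangular matrix algebra with entries
`A, U, 0, k`, realized as the trivial square-zero extension of `A × k` by the
`(A × k)`-bimodule `U` (with `A` acting on the left and `k` on the right). -/
noncomputable abbrev OnePointExt : Type _ := TrivSqZeroExt (A × k) U

/-- The idempotent of `A' = A[U]` at the extension vertex. -/
noncomputable def extIdem : OnePointExt k A U := TrivSqZeroExt.inl ((0 : A), (1 : k))

/-- `P = A'·e`: the projective cover of the new simple `S`; its radical is `U` and there
is an exact sequence `0 → U → P → S → 0`. -/
noncomputable def ProjCover : Submodule (OnePointExt k A U) (OnePointExt k A U) :=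
  Submodule.span (OnePointExt k A U) {extIdem k A U}

end OnePointExtension
set_option linter.unusedSectionVars false
set_option linter.unusedVariables false
set_option maxHeartbeats 1000000
set_option synthInstance.maxHeartbeats 400000

namespace OPEaux
open TrivSqZeroExt

variable {k A U : Type*} [Field k] [Ring A] [Algebra k A]
  [AddCommGroup U] [Module k U] [Module A U] [IsScalarTower k A U]



/-- embedding of `A` into the one-point extension -/
noncomputable def eA (a : A) : OnePointExt k A U := TrivSqZeroExt.inl (a, (0:k))

/-- embedding of `U` into the one-point extension -/
noncomputable def iU (u : U) : OnePointExt k A U := TrivSqZeroExt.inr u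

lemma prod_smul (a : A) (c : k) (u : U) : ((a, c) : A × k) • u = a • u := rfl

lemma op_smul (a : A) (c : k) (u : U) : (MulOpposite.op ((a, c) : A × k)) • u = c • u := rfl

lemma fst_e : (extIdem k A U).fst = ((0 : A), (1 : k)) := rfl
lemma snd_e : (extIdem k A U).snd = (0 : U) := rfl
lemma fst_eA (a : A) : (eA (k := k) (U := U) a).fst = ((a : A), (0 : k)) := rfl
lemma snd_eA (a : A) : (eA (k := k) (U := U) a).snd = (0 : U) := rfl
lemma fst_iU (u : U) : (iU (k := k) (A := A) u).fst = ((0 : A), (0 : k)) := rfl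
lemma snd_iU (u : U) : (iU (k := k) (A := A) u).snd = u := rfl

lemma eA_add (a b : A) : eA (k := k) (U := U) (a + b) = eA a + eA b := by
  rw [eA, eA, eA, ← inl_add]; norm_num

lemma eA_zero : eA (k := k) (U := U) (0 : A) = 0 := by
  rw [eA, ← inl_zero (M := U)]; rfl

lemma iU_add (u v : U) : iU (k := k) (A := A) (u + v) = iU u + iU v := by
  rw [iU, iU, iU, inr_add]

lemma e_mul_e : extIdem k A U * extIdem k A U = extIdem k A U := by
  rw [extIdem, inl_mul_inl, Prod.mk_mul_mk, mul_one, mul_zero]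

lemma e_mul_eA (a : A) : extIdem k A U * eA (k := k) a = 0 := by
  rw [extIdem, eA, inl_mul_inl, Prod.mk_mul_mk, mul_zero, zero_mul,
    ← inl_zero (R := A × k) (M := U)]
  rfl

lemma eA_mul_eA (a b : A) : eA (k := k) (U := U) a * eA b = eA (a * b) := by
  rw [eA, eA, eA, inl_mul_inl, Prod.mk_mul_mk, mul_zero]

lemma e_mul_iU (u : U) : extIdem k A U * iU u = 0 := by
  rw [extIdem, iU, inl_mul_inr]
  show TrivSqZeroExt.inr ((0 : A) • u) = 0
  rw [zero_smul, inr_zero]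

lemma iU_mul (u : U) (x : (OnePointExt k A U)) : iU u * x = iU (x.fst.2 • u) := by
  refine TrivSqZeroExt.ext ?_ ?_
  · show (0 : A × k) * x.fst = 0
    rw [zero_mul]
  · show (0 : A × k) • x.snd + MulOpposite.op x.fst • u = x.fst.2 • u
    rw [zero_smul, zero_add]
    rfl

lemma eA_mul_iU (a : A) (u : U) : eA (k := k) a * iU u = iU (a • u) := by
  rw [eA, iU, inl_mul_inr]
  rfl

lemma e_mul (x : (OnePointExt k A U)) : extIdem k A U * x = TrivSqZeroExt.inl ((0 : A), x.fst.2) := by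
  refine TrivSqZeroExt.ext ?_ ?_
  · show ((0 : A), (1 : k)) * x.fst = ((0 : A), x.fst.2)
    rw [Prod.mk_mul_mk (M := A) (N := k)]
    norm_num
  · show ((0 : A), (1 : k)) • x.snd + MulOpposite.op x.fst • (0 : U) = (0 : U)
    rw [smul_zero, add_zero, prod_smul, zero_smul]

lemma eA_one_mul (x : (OnePointExt k A U)) : eA (k := k) 1 * x = eA x.fst.1 + iU x.snd := by
  refine TrivSqZeroExt.ext ?_ ?_
  · show ((1 : A), (0 : k)) * x.fst = (x.fst.1, (0 : k)) + ((0 : A), (0 : k))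
    rw [Prod.mk_mul_mk (M := A) (N := k)]
    norm_num
  · show ((1 : A), (0 : k)) • x.snd + MulOpposite.op x.fst • (0 : U) = (0 : U) + x.snd
    rw [smul_zero, add_zero, prod_smul, one_smul, zero_add]

lemma one_eq : (1 : (OnePointExt k A U)) = eA 1 + extIdem k A U := by
  refine TrivSqZeroExt.ext ?_ ?_
  · show ((1 : A), (1 : k)) = ((1 : A), (0 : k)) + ((0 : A), (1 : k))
    norm_num
  · show (0 : U) = 0 + 0
    rw [add_zero]

lemma mem_projCover {x : (OnePointExt k A U)} : x ∈ ProjCover k A U ↔ x.fst.1 = 0 := by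
  constructor
  · intro hx
    obtain ⟨r, hr⟩ := Submodule.mem_span_singleton.mp hx
    rw [← hr]
    show ((r * extIdem k A U).fst).1 = 0
    rw [fst_mul, fst_e]
    show r.fst.1 * 0 = 0
    rw [mul_zero]
  · intro hx
    have : x • extIdem k A U = x := by
      show x * extIdem k A U = x
      refine TrivSqZeroExt.ext ?_ ?_
      · show x.fst * ((0 : A), (1 : k)) = x.fst
        refine Prod.ext ?_ ?_
        · show x.fst.1 * 0 = x.fst.1
          rw [mul_zero, hx]
        · show x.fst.2 * 1 = x.fst.2
          rw [mul_one]
      · show x.fst • (0 : U) + MulOpposite.op ((0:A), (1:k)) • x.snd = x.snd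
        rw [smul_zero, zero_add, op_smul, one_smul]
    exact this ▸ Submodule.smul_mem _ x (Submodule.mem_span_singleton_self _)

/-- the element of `P` with coordinates `(c, u)` -/
noncomputable def mkP (c : k) (u : U) : ProjCover k A U :=
  ⟨⟨((0 : A), c), u⟩, mem_projCover.mpr rfl⟩

lemma coe_mkP (c : k) (u : U) : ((mkP (A := A) c u : ProjCover k A U) : (OnePointExt k A U)) = ⟨((0:A), c), u⟩ := rfl

lemma mkP_add (c c' : k) (u u' : U) :
    mkP (A := A) c u + mkP c' u' = mkP (c + c') (u + u') := by
  refine Subtype.ext (TrivSqZeroExt.ext ?_ ?_)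
  · exact Prod.ext (add_zero (0:A)) rfl
  · rfl

lemma coe_smul_P (r : (OnePointExt k A U)) (p : ProjCover k A U) :
    ((r • p : ProjCover k A U) : (OnePointExt k A U)) = r * (p : (OnePointExt k A U)) := by
  rw [SetLike.val_smul, smul_eq_mul]

lemma smul_mkP (r : (OnePointExt k A U)) (c : k) (u : U) :
    r • mkP (A := A) c u = mkP (r.fst.2 * c) (r.fst.1 • u + c • r.snd) := by
  refine Subtype.ext ?_
  rw [coe_smul_P, coe_mkP, coe_mkP]
  refine TrivSqZeroExt.ext ?_ ?_
  · show r.fst * ((0 : A), c) = ((0 : A), r.fst.2 * c)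
    refine Prod.ext ?_ ?_
    · show r.fst.1 * 0 = 0
      rw [mul_zero]
    · rfl
  · show r.fst • u + MulOpposite.op ((0:A), c) • r.snd = r.fst.1 • u + c • r.snd
    rw [op_smul]
    rfl

lemma eq_mkP (p : ProjCover k A U) : p = mkP (p : (OnePointExt k A U)).fst.2 (p : (OnePointExt k A U)).snd := by
  refine Subtype.ext (TrivSqZeroExt.ext ?_ ?_)
  · refine Prod.ext ?_ rfl
    exact mem_projCover.mp p.2
  · rfl

lemma snd_smul_P (r : (OnePointExt k A U)) (p : ProjCover k A U) :
    ((r • p : ProjCover k A U) : (OnePointExt k A U)).snd = r.fst.1 • (p : (OnePointExt k A U)).snd + (p : (OnePointExt k A U)).fst.2 • r.snd := by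
  conv_lhs => rw [eq_mkP p]
  rw [smul_mkP, coe_mkP]
  rfl

lemma fst2_smul_P (r : (OnePointExt k A U)) (p : ProjCover k A U) :
    ((r • p : ProjCover k A U) : (OnePointExt k A U)).fst.2 = r.fst.2 * (p : (OnePointExt k A U)).fst.2 := by
  conv_lhs => rw [eq_mkP p]
  rw [smul_mkP, coe_mkP]
  rfl

lemma scalar_unique [Nontrivial U] {c d : k} (h : ∀ u : U, c • u = d • u) : c = d := by
  by_contra hcd
  obtain ⟨u, hu⟩ := exists_ne (0 : U)
  have h2 : (c - d) • u = 0 := by rw [sub_smul, h u, sub_self]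
  have h3 := congrArg (fun x => (c - d)⁻¹ • x) h2
  simp only [smul_smul, inv_mul_cancel₀ (sub_ne_zero.mpr hcd), one_smul, smul_zero] at h3
  exact hu h3

section Vpart

variable (Y : Type*) [AddCommGroup Y] [Module (OnePointExt k A U) Y]

/-- the `A`-module part of an `(OnePointExt k A U)`-module -/
def Vgrp : AddSubgroup Y where
  carrier := {y | extIdem k A U • y = 0}
  add_mem' := by
    intro a b ha hb
    show extIdem k A U • (a + b) = 0
    rw [smul_add, ha, hb, add_zero]
  zero_mem' := smul_zero _
  neg_mem' := by
    intro a ha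
    show extIdem k A U • (-a) = 0
    rw [smul_neg, ha, neg_zero]

variable {Y}

lemma eA_smul_mem (a : A) (y : Y) : eA (k := k) (U := U) a • y ∈ Vgrp (k := k) (A := A) (U := U) Y := by
  show extIdem k A U • (eA a • y) = 0
  rw [← mul_smul, e_mul_eA, zero_smul]

lemma iU_smul_mem (u : U) (y : Y) : iU (k := k) (A := A) u • y ∈ Vgrp (k := k) (A := A) (U := U) Y := by
  show extIdem k A U • (iU u • y) = 0
  rw [← mul_smul, e_mul_iU, zero_smul]

noncomputable instance : SMul A ↥(Vgrp (k := k) (A := A) (U := U) Y) :=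
  ⟨fun a y => ⟨eA (k := k) (U := U) a • (y : Y), eA_smul_mem a _⟩⟩

lemma coe_Vsmul (a : A) (y : ↥(Vgrp (k := k) (A := A) (U := U) Y)) :
    ((a • y : ↥(Vgrp (k := k) (A := A) (U := U) Y)) : Y) = eA (k := k) (U := U) a • (y : Y) := rfl

noncomputable instance VModule : Module A ↥(Vgrp (k := k) (A := A) (U := U) Y) where
  one_smul y := by
    refine Subtype.ext ?_
    rw [coe_Vsmul]
    have hy : extIdem k A U • (y : Y) = 0 := y.2
    have h1 : eA (k := k) (U := U) (1 : A) = 1 - extIdem k A U := by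
      rw [one_eq]; abel
    rw [h1, sub_smul, one_smul, hy, sub_zero]
  mul_smul a b y := by
    refine Subtype.ext ?_
    rw [coe_Vsmul, coe_Vsmul, coe_Vsmul, ← mul_smul, eA_mul_eA]
  smul_zero a := by
    refine Subtype.ext ?_
    rw [coe_Vsmul]
    show eA (k := k) a • (0 : Y) = 0
    rw [smul_zero]
  smul_add a y z := by
    refine Subtype.ext ?_
    rw [coe_Vsmul]
    show eA (k := k) a • ((y : Y) + (z : Y)) = eA a • (y : Y) + eA a • (z : Y)
    rw [smul_add]
  add_smul a b y := by
    refine Subtype.ext ?_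
    rw [coe_Vsmul]
    show eA (k := k) (a + b) • (y : Y) = eA a • (y : Y) + eA b • (y : Y)
    rw [eA_add, add_smul]
  zero_smul y := by
    refine Subtype.ext ?_
    rw [coe_Vsmul]
    show eA (k := k) (0 : A) • (y : Y) = 0
    rw [eA_zero, zero_smul]

variable {X : Type*} [AddCommGroup X] [Module (OnePointExt k A U) X]

/-- restriction of an `(OnePointExt k A U)`-linear map to the `A`-module parts -/
noncomputable def Vmap (f : X →ₗ[(OnePointExt k A U)] Y) :
    ↥(Vgrp (k := k) (A := A) (U := U) X) →ₗ[A] ↥(Vgrp (k := k) (A := A) (U := U) Y) where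
  toFun x := ⟨f (x : X), by
    show extIdem k A U • f (x : X) = 0
    rw [← map_smul, show extIdem k A U • (x : X) = 0 from x.2, map_zero]⟩
  map_add' x y := by
    refine Subtype.ext ?_
    show f ((x : X) + (y : X)) = f (x : X) + f (y : X)
    rw [map_add]
  map_smul' a x := by
    refine Subtype.ext ?_
    show f (eA (k := k) a • (x : X)) = eA a • f (x : X)
    rw [map_smul]

lemma Vmap_inj {f : X →ₗ[(OnePointExt k A U)] Y} (hf : Function.Injective f) :
    Function.Injective (Vmap (k := k) f) := by
  intro x y hxy
  refine Subtype.ext (hf ?_)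
  exact congrArg Subtype.val hxy

/-- the `U`-component of an `(OnePointExt k A U)`-linear map into `P` -/
noncomputable def gU (g : X →ₗ[(OnePointExt k A U)] ProjCover k A U) :
    ↥(Vgrp (k := k) (A := A) (U := U) X) →ₗ[A] U where
  toFun x := ((g (x : X) : ProjCover k A U) : (OnePointExt k A U)).snd
  map_add' x y := by
    show ((g ((x : X) + (y : X)) : ProjCover k A U) : (OnePointExt k A U)).snd = _
    rw [map_add]
    rfl
  map_smul' a x := by
    show ((g (eA (k := k) a • (x : X)) : ProjCover k A U) : (OnePointExt k A U)).snd = _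
    rw [map_smul, snd_smul_P, fst_eA, snd_eA, smul_zero, add_zero]
    rfl

end Vpart

end OPEaux
namespace OPEaux
open TrivSqZeroExt

section Main

variable {k A U : Type*} [Field k] [Ring A] [Algebra k A]
  [AddCommGroup U] [Module k U] [Module A U] [IsScalarTower k A U]

/-- projecting the one-point extension onto `A` -/
noncomputable def fstA : OnePointExt k A U →+* A where
  toFun x := x.fst.1
  map_one' := rfl
  map_mul' x y := rfl
  map_zero' := rfl
  map_add' x y := rfl

theorem forward_injective
    (hP : Module.Injective (OnePointExt k A U) (ProjCover k A U)) :
    Module.Injective A U := by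
  refine ⟨fun X Y _ _ _ _ f hf g => ?_⟩
  letI mX : Module (OnePointExt k A U) X := Module.compHom X (fstA (k := k) (A := A) (U := U))
  letI mY : Module (OnePointExt k A U) Y := Module.compHom Y (fstA (k := k) (A := A) (U := U))
  haveI := hP
  let F : X →ₗ[OnePointExt k A U] Y :=
    { toFun := f
      map_add' := f.map_add
      map_smul' := fun r x => f.map_smul r.fst.1 x }
  let G : X →ₗ[OnePointExt k A U] ProjCover k A U :=
    { toFun := fun x => mkP 0 (g x)
      map_add' := fun x y => by
        show mkP 0 (g (x + y)) = mkP 0 (g x) + mkP 0 (g y)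
        rw [map_add, mkP_add, add_zero]
      map_smul' := fun r x => by
        show mkP 0 (g (r.fst.1 • x)) = r • mkP 0 (g x)
        rw [map_smul, smul_mkP, mul_zero, zero_smul, add_zero] }
  obtain ⟨H, hH⟩ := Module.Injective.extension_property (OnePointExt k A U)
    (ProjCover k A U) X Y F hf G
  refine ⟨{ toFun := fun y => ((H y : ProjCover k A U) : OnePointExt k A U).snd,
            map_add' := fun y z => by
              show ((H (y + z) : ProjCover k A U) : OnePointExt k A U).snd = _
              rw [map_add]; rfl,
            map_smul' := fun a y => ?_ }, fun x => ?_⟩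
  · show ((H ((TrivSqZeroExt.inl ((a : A), (1 : k)) : OnePointExt k A U) • y) :
        ProjCover k A U) : OnePointExt k A U).snd
      = a • ((H y : ProjCover k A U) : OnePointExt k A U).snd
    rw [map_smul, snd_smul_P]
    show a • _ + _ • (0 : U) = _
    rw [smul_zero, add_zero]
  · show ((H (F x) : ProjCover k A U) : OnePointExt k A U).snd = g x
    have hx := LinearMap.congr_fun hH x
    rw [LinearMap.comp_apply] at hx
    rw [hx]
    rfl

lemma map_ksmul (φ : U →ₗ[A] U) (c : k) (u : U) : φ (c • u) = c • φ u := by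
  have h1 : c • u = (c • (1 : A)) • u := by rw [smul_assoc, one_smul]
  have h2 : c • φ u = (c • (1 : A)) • φ u := by rw [smul_assoc, one_smul]
  rw [h1, h2, LinearMap.map_smul]

/-- the module `(U, k²)` attached to an endomorphism `φ` of `U` -/
noncomputable def YMmod (φ : U →ₗ[A] U) : Module (OnePointExt k A U) (U × k × k) where
  smul r y := (r.fst.1 • y.1 + y.2.1 • r.snd + y.2.2 • φ r.snd,
    r.fst.2 * y.2.1, r.fst.2 * y.2.2)
  one_smul y := by
    show ((1 : A) • y.1 + y.2.1 • (0 : U) + y.2.2 • φ 0, (1:k) * y.2.1, (1:k) * y.2.2) = y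
    rw [one_smul, map_zero, smul_zero, smul_zero, add_zero, add_zero, one_mul, one_mul]
  mul_smul r s y := by
    refine Prod.ext ?_ (Prod.ext ?_ ?_)
    · show ((r.fst.1 * s.fst.1) • y.1 + y.2.1 • (r.fst.1 • s.snd + s.fst.2 • r.snd)
          + y.2.2 • φ (r.fst.1 • s.snd + s.fst.2 • r.snd))
        = r.fst.1 • (s.fst.1 • y.1 + y.2.1 • s.snd + y.2.2 • φ s.snd)
          + (s.fst.2 * y.2.1) • r.snd + (s.fst.2 * y.2.2) • φ r.snd
      rw [map_add, LinearMap.map_smul, map_ksmul]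
      rw [smul_add y.2.1, smul_add y.2.2]
      rw [smul_comm y.2.1 r.fst.1 s.snd, smul_comm y.2.2 r.fst.1 (φ s.snd)]
      rw [smul_smul y.2.1 s.fst.2 r.snd, smul_smul y.2.2 s.fst.2 (φ r.snd)]
      rw [mul_comm y.2.1 s.fst.2, mul_comm y.2.2 s.fst.2]
      rw [mul_smul r.fst.1 s.fst.1 y.1]
      rw [smul_add r.fst.1, smul_add r.fst.1]
      abel
    · show r.fst.2 * s.fst.2 * y.2.1 = r.fst.2 * (s.fst.2 * y.2.1)
      rw [mul_assoc]
    · show r.fst.2 * s.fst.2 * y.2.2 = r.fst.2 * (s.fst.2 * y.2.2)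
      rw [mul_assoc]
  smul_zero r := by
    show (r.fst.1 • (0:U) + (0:k) • r.snd + (0:k) • φ r.snd, r.fst.2 * 0, r.fst.2 * 0)
      = ((0 : U), (0:k), (0:k))
    rw [smul_zero, zero_smul, zero_smul, add_zero, add_zero, mul_zero]
  smul_add r y z := by
    refine Prod.ext ?_ (Prod.ext ?_ ?_)
    · show r.fst.1 • (y.1 + z.1) + (y.2.1 + z.2.1) • r.snd + (y.2.2 + z.2.2) • φ r.snd
        = (r.fst.1 • y.1 + y.2.1 • r.snd + y.2.2 • φ r.snd)
          + (r.fst.1 • z.1 + z.2.1 • r.snd + z.2.2 • φ r.snd)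
      rw [smul_add, add_smul, add_smul]
      abel
    · show r.fst.2 * (y.2.1 + z.2.1) = r.fst.2 * y.2.1 + r.fst.2 * z.2.1
      rw [mul_add]
    · show r.fst.2 * (y.2.2 + z.2.2) = r.fst.2 * y.2.2 + r.fst.2 * z.2.2
      rw [mul_add]
  add_smul r s y := by
    refine Prod.ext ?_ (Prod.ext ?_ ?_)
    · show (r.fst.1 + s.fst.1) • y.1 + y.2.1 • (r.snd + s.snd) + y.2.2 • φ (r.snd + s.snd)
        = (r.fst.1 • y.1 + y.2.1 • r.snd + y.2.2 • φ r.snd)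
          + (s.fst.1 • y.1 + y.2.1 • s.snd + y.2.2 • φ s.snd)
      rw [map_add, add_smul, smul_add, smul_add]
      abel
    · show (r.fst.2 + s.fst.2) * y.2.1 = r.fst.2 * y.2.1 + s.fst.2 * y.2.1
      rw [add_mul]
    · show (r.fst.2 + s.fst.2) * y.2.2 = r.fst.2 * y.2.2 + s.fst.2 * y.2.2
      rw [add_mul]
  zero_smul y := by
    show ((0 : A) • y.1 + y.2.1 • (0 : U) + y.2.2 • φ 0, (0:k) * y.2.1, (0:k) * y.2.2)
      = ((0 : U), (0:k), (0:k))
    rw [zero_smul, map_zero, smul_zero, smul_zero, add_zero, add_zero, zero_mul, zero_mul]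

theorem forward_end [Nontrivial U]
    (hP : Module.Injective (OnePointExt k A U) (ProjCover k A U)) (φ : U →ₗ[A] U) :
    ∃ c : k, ∀ u, φ u = c • u := by
  letI := YMmod (k := k) φ
  haveI := hP
  have hsmul : ∀ (r : OnePointExt k A U) (y : U × k × k),
      r • y = (r.fst.1 • y.1 + y.2.1 • r.snd + y.2.2 • φ r.snd,
        r.fst.2 * y.2.1, r.fst.2 * y.2.2) := fun r y => rfl
  let F : ProjCover k A U →ₗ[OnePointExt k A U] (U × k × k) :=
    { toFun := fun p => ((p : OnePointExt k A U).snd, (p : OnePointExt k A U).fst.2, 0)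
      map_add' := fun p q => by
        refine Prod.ext ?_ (Prod.ext ?_ ?_)
        · rfl
        · rfl
        · show (0 : k) = 0 + 0
          rw [add_zero]
      map_smul' := fun r p => by
        rw [RingHom.id_apply, hsmul]
        refine Prod.ext ?_ (Prod.ext ?_ ?_)
        · show ((r • p : ProjCover k A U) : OnePointExt k A U).snd
            = r.fst.1 • (p : OnePointExt k A U).snd
              + (p : OnePointExt k A U).fst.2 • r.snd + (0:k) • φ r.snd
          rw [snd_smul_P, zero_smul, add_zero]
        · show ((r • p : ProjCover k A U) : OnePointExt k A U).fst.2
            = r.fst.2 * (p : OnePointExt k A U).fst.2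
          rw [fst2_smul_P]
        · show (0 : k) = r.fst.2 * 0
          rw [mul_zero] }
  have hF : Function.Injective F := by
    intro p q hpq
    have h1 : (p : OnePointExt k A U).snd = (q : OnePointExt k A U).snd :=
      congrArg Prod.fst hpq
    have h2 : (p : OnePointExt k A U).fst.2 = (q : OnePointExt k A U).fst.2 :=
      congrArg (fun z => z.2.1) hpq
    rw [eq_mkP p, eq_mkP q, h1, h2]
  obtain ⟨H, hH⟩ := Module.Injective.extension_property (OnePointExt k A U)
    (ProjCover k A U) (ProjCover k A U) (U × k × k) F hF LinearMap.id
  refine ⟨((H ((0:U), (0:k), (1:k)) : ProjCover k A U) : OnePointExt k A U).fst.2,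
    fun u => ?_⟩
  have h1 : iU (k := k) (A := A) u • (((0:U), (0:k), (1:k)) : U × k × k)
      = F (mkP (k := k) (A := A) (0:k) (φ u)) := by
    rw [hsmul]
    refine Prod.ext ?_ (Prod.ext ?_ ?_)
    · show (iU (k := k) (A := A) u).fst.1 • (0:U) + (0:k) • (iU (k := k) (A := A) u).snd
        + (1:k) • φ (iU (k := k) (A := A) u).snd
        = (mkP (k := k) (A := A) (0:k) (φ u) : OnePointExt k A U).snd
      rw [snd_iU, coe_mkP, smul_zero, zero_smul, one_smul, zero_add, zero_add]
      rfl
    · show (iU (k := k) (A := A) u).fst.2 * 0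
        = (mkP (k := k) (A := A) (0:k) (φ u) : OnePointExt k A U).fst.2
      rw [mul_zero, coe_mkP]
      rfl
    · show (0:k) * 1 = (0:k)
      rw [zero_mul]
  have h2 : mkP (k := k) (A := A) (0:k) (φ u)
      = iU (k := k) (A := A) u • H ((0:U), (0:k), (1:k)) := by
    have h3 := LinearMap.congr_fun hH (mkP (k := k) (A := A) (0:k) (φ u))
    rw [LinearMap.comp_apply, LinearMap.id_apply] at h3
    rw [← h3, ← h1, map_smul]
  have h4 : (mkP (k := k) (A := A) (0:k) (φ u) : OnePointExt k A U).snd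
      = ((iU (k := k) (A := A) u • H ((0:U), (0:k), (1:k)) : ProjCover k A U)
          : OnePointExt k A U).snd := by
    rw [h2]
  rw [coe_mkP, snd_smul_P, fst_iU, snd_iU] at h4
  have h5 : φ u = (0:A) • ((H ((0:U), (0:k), (1:k)) : ProjCover k A U) : OnePointExt k A U).snd
      + ((H ((0:U), (0:k), (1:k)) : ProjCover k A U) : OnePointExt k A U).fst.2 • u := h4
  rw [zero_smul, zero_add] at h5
  exact h5

end Main
end OPEaux
namespace OPEaux
open TrivSqZeroExt

universe uk uA uU

theorem backward {k : Type uk} {A : Type uA} {U : Type uU} [Field k] [Ring A] [Algebra k A]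
    [AddCommGroup U] [Module k U] [Module A U] [IsScalarTower k A U] [Nontrivial U]
    [FiniteDimensional k A]
    (hU : Module.Injective A U)
    (hsc : ∀ φ : U →ₗ[A] U, ∃ c : k, ∀ u, φ u = c • u)
    (hsmallk : Small.{uU} k) :
    Module.Injective (OnePointExt k A U) (ProjCover k A U) := by
  haveI := hsmallk
  haveI hsmallA : Small.{uU} A := by
    let b := Module.finBasis k A
    refine small_of_injective (f := fun a i => b.repr a i) ?_
    intro a a' h
    exact b.repr.injective (DFunLike.coe_injective (funext fun i => congrFun h i))
  haveI := hU
  refine ⟨fun X Y _ _ _ _ f hf g => ?_⟩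
  obtain ⟨ψ, hψ⟩ := Module.Injective.extension_property A U
    (↥(Vgrp (k := k) (A := A) (U := U) X)) (↥(Vgrp (k := k) (A := A) (U := U) Y))
    (Vmap (k := k) f) (Vmap_inj hf) (gU g)
  -- the endomorphism of U attached to `y : Y`
  let Φ : Y → (U →ₗ[A] U) := fun y =>
    { toFun := fun u => ψ ⟨iU (k := k) (A := A) u • y, iU_smul_mem u y⟩
      map_add' := fun u v => by
        show ψ ⟨iU (k := k) (A := A) (u + v) • y, iU_smul_mem _ y⟩
          = ψ ⟨iU (k := k) (A := A) u • y, iU_smul_mem u y⟩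
            + ψ ⟨iU (k := k) (A := A) v • y, iU_smul_mem v y⟩
        rw [← map_add]
        congr 1
        refine Subtype.ext ?_
        show iU (k := k) (A := A) (u + v) • y
          = iU (k := k) (A := A) u • y + iU (k := k) (A := A) v • y
        rw [iU_add, add_smul]
      map_smul' := fun a u => by
        show ψ ⟨iU (k := k) (A := A) (a • u) • y, iU_smul_mem _ y⟩
          = a • ψ ⟨iU (k := k) (A := A) u • y, iU_smul_mem u y⟩
        rw [← map_smul]
        congr 1
        refine Subtype.ext ?_
        show iU (k := k) (A := A) (a • u) • y
          = eA (k := k) (U := U) a • (iU (k := k) (A := A) u • y)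
        rw [← mul_smul, eA_mul_iU] }
  choose cf hcf using fun y => hsc (Φ y)
  have hΦ : ∀ (y : Y) (u : U),
      ψ ⟨iU (k := k) (A := A) u • y, iU_smul_mem u y⟩ = cf y • u := hcf
  -- the A-module part of an element of Y
  have hcf_smul : ∀ (r : OnePointExt k A U) (y : Y), cf (r • y) = r.fst.2 * cf y := by
    intro r y
    refine scalar_unique (U := U) (fun u => ?_)
    rw [← hΦ (r • y) u]
    have he : (⟨iU (k := k) (A := A) u • (r • y), iU_smul_mem u (r • y)⟩ :
        ↥(Vgrp (k := k) (A := A) (U := U) Y))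
        = ⟨iU (k := k) (A := A) (r.fst.2 • u) • y, iU_smul_mem _ y⟩ := by
      refine Subtype.ext ?_
      show iU (k := k) (A := A) u • (r • y) = iU (k := k) (A := A) (r.fst.2 • u) • y
      rw [← mul_smul, iU_mul]
    rw [he, hΦ y (r.fst.2 • u), smul_smul, mul_comm (cf y) r.fst.2, mul_smul]
  have hcf_add : ∀ (y z : Y), cf (y + z) = cf y + cf z := by
    intro y z
    refine scalar_unique (U := U) (fun u => ?_)
    rw [← hΦ (y + z) u]
    have he : (⟨iU (k := k) (A := A) u • (y + z), iU_smul_mem u (y + z)⟩ :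
        ↥(Vgrp (k := k) (A := A) (U := U) Y))
        = ⟨iU (k := k) (A := A) u • y, iU_smul_mem u y⟩
          + ⟨iU (k := k) (A := A) u • z, iU_smul_mem u z⟩ := by
      refine Subtype.ext ?_
      show iU (k := k) (A := A) u • (y + z) = iU (k := k) (A := A) u • y
        + iU (k := k) (A := A) u • z
      rw [smul_add]
    rw [he, map_add, hΦ y u, hΦ z u, add_smul]
  refine ⟨{ toFun := fun y => mkP (cf y) (ψ ⟨eA (k := k) (U := U) 1 • y, eA_smul_mem 1 y⟩),
            map_add' := fun y z => ?_, map_smul' := fun r y => ?_ }, fun x => ?_⟩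
  · show mkP (cf (y + z)) _ = mkP (cf y) _ + mkP (cf z) _
    rw [mkP_add, hcf_add]
    congr 1
    rw [← map_add]
    congr 1
    refine Subtype.ext ?_
    show eA (k := k) (U := U) 1 • (y + z)
      = eA (k := k) (U := U) 1 • y + eA (k := k) (U := U) 1 • z
    rw [smul_add]
  · rw [RingHom.id_apply]
    show mkP (cf (r • y)) _ = r • mkP (cf y) _
    rw [smul_mkP, hcf_smul]
    congr 1
    -- U component
    have he : (⟨eA (k := k) (U := U) 1 • (r • y), eA_smul_mem 1 (r • y)⟩ :
        ↥(Vgrp (k := k) (A := A) (U := U) Y))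
        = r.fst.1 • ⟨eA (k := k) (U := U) 1 • y, eA_smul_mem 1 y⟩
          + ⟨iU (k := k) (A := A) r.snd • y, iU_smul_mem r.snd y⟩ := by
      refine Subtype.ext ?_
      show eA (k := k) (U := U) 1 • (r • y)
        = eA (k := k) (U := U) r.fst.1 • (eA (k := k) (U := U) 1 • y)
          + iU (k := k) (A := A) r.snd • y
      rw [← mul_smul, ← mul_smul, eA_mul_eA, mul_one, ← add_smul, ← eA_one_mul]
    rw [he, map_add, map_smul, hΦ y r.snd]
  · show mkP (cf (f x)) _ = g x
    conv_rhs => rw [eq_mkP (g x)]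
    have hcomp : ∀ z : ↥(Vgrp (k := k) (A := A) (U := U) X),
        ψ (Vmap (k := k) f z) = ((g (z : X) : ProjCover k A U) : OnePointExt k A U).snd :=
      fun z => LinearMap.congr_fun hψ z
    congr 1
    · -- k component
      refine scalar_unique (U := U) (fun u => ?_)
      rw [← hΦ (f x) u]
      have he : (⟨iU (k := k) (A := A) u • f x, iU_smul_mem u (f x)⟩ :
          ↥(Vgrp (k := k) (A := A) (U := U) Y))
          = Vmap (k := k) f ⟨iU (k := k) (A := A) u • x, iU_smul_mem u x⟩ := by
        refine Subtype.ext ?_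
        show iU (k := k) (A := A) u • f x = f (iU (k := k) (A := A) u • x)
        rw [map_smul]
      rw [he, hcomp]
      show ((g (iU (k := k) (A := A) u • x) : ProjCover k A U) : OnePointExt k A U).snd = _
      rw [map_smul, snd_smul_P, fst_iU, snd_iU]
      show (0 : A) • _ + _ • u = _
      rw [zero_smul, zero_add]
    · -- U component
      have he : (⟨eA (k := k) (U := U) 1 • f x, eA_smul_mem 1 (f x)⟩ :
          ↥(Vgrp (k := k) (A := A) (U := U) Y))
          = Vmap (k := k) f ⟨eA (k := k) (U := U) 1 • x, eA_smul_mem 1 x⟩ := by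
        refine Subtype.ext ?_
        show eA (k := k) (U := U) 1 • f x = f (eA (k := k) (U := U) 1 • x)
        rw [map_smul]
      rw [he, hcomp]
      show ((g (eA (k := k) (U := U) 1 • x) : ProjCover k A U) : OnePointExt k A U).snd = _
      rw [map_smul, snd_smul_P, fst_eA, snd_eA]
      show (1 : A) • _ + _ • (0 : U) = _
      rw [one_smul, smul_zero, add_zero]

end OPEaux
/-- let `A'` be the one-point extension of a finite-dimensional algebra `A`
over an algebraically closed field `k` by a nonzero `A`-module `U`, and let `P` be the
projective cover of the new simple `A'`-module.  Then `P` is injective as an `A'`-module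
if and only if `U` is an injective `A`-module whose endomorphism algebra is isomorphic
to `k`. -/
theorem stmt4 (k A U : Type*) [Field k] [IsAlgClosed k] [Ring A] [Algebra k A]
    [FiniteDimensional k A] [AddCommGroup U] [Module k U] [Module A U]
    [IsScalarTower k A U] [FiniteDimensional k U] [Nontrivial U] :
    Module.Injective (OnePointExt k A U) (ProjCover k A U) ↔
      (Module.Injective A U ∧ Nonempty ((Module.End A U) ≃ₐ[k] k)) := by
  constructor
  · intro hP
    refine ⟨OPEaux.forward_injective hP, ?_⟩
    have hsc : ∀ φ : U →ₗ[A] U, ∃ c : k, ∀ u, φ u = c • u :=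
      fun φ => OPEaux.forward_end hP φ
    have hinj : Function.Injective (algebraMap k (Module.End A U)) := by
      intro c d hcd
      refine OPEaux.scalar_unique (U := U) (fun u => ?_)
      have h1 := congrArg (fun (ψ : Module.End A U) => ψ u) hcd
      simpa using h1
    have hsurj : Function.Surjective (algebraMap k (Module.End A U)) := by
      intro φ
      obtain ⟨c, hc⟩ := hsc φ
      refine ⟨c, ?_⟩
      refine LinearMap.ext fun u => ?_
      rw [Module.algebraMap_end_apply]
      exact (hc u).symm
    exact ⟨(AlgEquiv.ofBijective (Algebra.ofId k (Module.End A U)) ⟨hinj, hsurj⟩).symm⟩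
  · rintro ⟨hU, ⟨e⟩⟩
    have hsc : ∀ φ : U →ₗ[A] U, ∃ c : k, ∀ u, φ u = c • u := by
      intro φ
      refine ⟨e φ, fun u => ?_⟩
      have h1 : φ = e.symm (e φ) := (e.symm_apply_apply φ).symm
      have h2 : e.symm (e φ) = algebraMap k (Module.End A U) (e φ) := by
        have h3 : (e φ : k) = algebraMap k k (e φ) := rfl
        conv_lhs => rw [h3]
        rw [AlgEquiv.commutes]
      conv_lhs => rw [h1, h2]
      rw [Module.algebraMap_end_apply]
    refine OPEaux.backward hU hsc ?_
    obtain ⟨u₀, hu₀⟩ := exists_ne (0 : U)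
    have hkinj : Function.Injective (fun c : k => c • u₀) := by
      intro c d hcd
      by_contra hne
      have hcd' : c • u₀ = d • u₀ := hcd
      have h2 : (c - d) • u₀ = 0 := by
        rw [sub_smul, hcd', sub_self]
      have h3 := congrArg (fun x => (c - d)⁻¹ • x) h2
      simp only [smul_smul, inv_mul_cancel₀ (sub_ne_zero.mpr hne), one_smul, smul_zero] at h3
      exact hu₀ h3
    exact small_of_injective hkinj
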